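/- Let p ≥ 2, β ≥ 1, δ > 0, M > 0, and define (t)⁺_M := min{max{t,0}, M}. Then for all real a, b, c, d: (J_p(a−b) − J_p(c−d)) · (((a−c)⁺_M + δ)^β − ((b−d)⁺_M + δ)^β) ≥ (1/(3·2^(p−1))) · (β p^p/(β+p−1)^p) · |((a−c)⁺_M + δ)^((β+p−1)/p) − ((b−d)⁺_M + δ)^((β+p−1)/p)|^p. -/

import Mathlib

open Set MeasureTheory

noncomputable def Jp (p t : ℝ) : ℝ := |t| ^ (p - 2) * t

noncomputable def truncPlus (M t : ℝ) : ℝ := min (max t 0) M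

lemma Jp_neg (p t : ℝ) : Jp p (-t) = - Jp p t := by
  unfold Jp; rw [abs_neg]; ring

lemma Jp_of_nonneg {p x : ℝ} (hp : 2 ≤ p) (hx : 0 ≤ x) : Jp p x = x ^ (p - 1) := by
  rcases eq_or_lt_of_le hx with h | h
  · rw [← h]; unfold Jp
    rw [Real.zero_rpow (sub_ne_zero_of_ne (ne_of_gt (by linarith : (1:ℝ) < p)))]
    simp
  · unfold Jp
    rw [abs_of_pos h, show p - 1 = (p - 2) + 1 by ring, Real.rpow_add_one (ne_of_gt h)]

lemma rpow_superadd {x y q : ℝ} (hx : 0 ≤ x) (hy : 0 ≤ y) (hq : 1 ≤ q) :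
    x ^ q + y ^ q ≤ (x + y) ^ q := by
  have h := NNReal.add_rpow_le_rpow_add x.toNNReal y.toNNReal hq
  have h2 := NNReal.coe_le_coe.2 h
  rw [NNReal.coe_add, NNReal.coe_rpow, NNReal.coe_rpow, NNReal.coe_rpow,
    ← Real.toNNReal_add hx hy, Real.coe_toNNReal _ hx, Real.coe_toNNReal _ hy,
    Real.coe_toNNReal _ (by positivity : (0:ℝ) ≤ x + y)] at h2
  exact h2

lemma rpow_two_point {x y q : ℝ} (hx : 0 ≤ x) (hy : 0 ≤ y) (hq : 1 ≤ q) :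
    (x + y) ^ q ≤ 2 ^ (q - 1) * (x ^ q + y ^ q) := by
  have h := NNReal.rpow_add_le_mul_rpow_add_rpow x.toNNReal y.toNNReal hq
  have h2 := NNReal.coe_le_coe.2 h
  rw [NNReal.coe_mul, NNReal.coe_add, NNReal.coe_rpow, NNReal.coe_rpow, NNReal.coe_rpow,
    NNReal.coe_rpow, NNReal.coe_add, Real.coe_toNNReal _ hx, Real.coe_toNNReal _ hy] at h2
  simpa using h2

/-- Lemma A : monotonicity estimate for `Jp`. -/
lemma JpA {p s t : ℝ} (hp : 2 ≤ p) (hts : t ≤ s) :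
    2 ^ (2 - p) * (s - t) ^ (p - 1) ≤ Jp p s - Jp p t := by
  have hq : (1:ℝ) ≤ p - 1 := by linarith
  have hK1 : (2:ℝ) ^ (2 - p) ≤ 1 :=
    Real.rpow_le_one_of_one_le_of_nonpos one_le_two (by linarith)
  have hKpos : (0:ℝ) < 2 ^ (2 - p) := Real.rpow_pos_of_pos two_pos _
  rcases le_total 0 t with h1 | h1
  · -- 0 ≤ t ≤ s
    rw [Jp_of_nonneg hp (le_trans h1 hts), Jp_of_nonneg hp h1]
    have hsup := rpow_superadd (by linarith : (0:ℝ) ≤ s - t) h1 hq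
    rw [sub_add_cancel] at hsup
    have hst : (0:ℝ) ≤ (s - t) ^ (p-1) := Real.rpow_nonneg (by linarith) _
    nlinarith [mul_le_of_le_one_left hst hK1]
  · rcases le_total s 0 with h2 | h2
    · -- t ≤ s ≤ 0
      have e1 : Jp p s = - (-s) ^ (p-1) := by
        rw [show s = -(-s) by ring, Jp_neg, Jp_of_nonneg hp (by linarith : (0:ℝ) ≤ -s)]
        ring_nf
      have e2 : Jp p t = - (-t) ^ (p-1) := by
        rw [show t = -(-t) by ring, Jp_neg, Jp_of_nonneg hp (by linarith : (0:ℝ) ≤ -t)]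
        ring_nf
      rw [e1, e2]
      have hsup := rpow_superadd (by linarith : (0:ℝ) ≤ s - t) (by linarith : (0:ℝ) ≤ -s) hq
      rw [show s - t + -s = -t by ring] at hsup
      have hst : (0:ℝ) ≤ (s - t) ^ (p-1) := Real.rpow_nonneg (by linarith) _
      nlinarith [mul_le_of_le_one_left hst hK1]
    · -- t ≤ 0 ≤ s
      have e1 : Jp p s = s ^ (p-1) := Jp_of_nonneg hp h2
      have e2 : Jp p t = - (-t) ^ (p-1) := by
        rw [show t = -(-t) by ring, Jp_neg, Jp_of_nonneg hp (by linarith : (0:ℝ) ≤ -t)]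
        ring_nf
      rw [e1, e2]
      have h2p := rpow_two_point h2 (by linarith : (0:ℝ) ≤ -t) hq
      rw [show s + -t = s - t by ring] at h2p
      have hmul := mul_le_mul_of_nonneg_left h2p (le_of_lt hKpos)
      have hEq : (2:ℝ) ^ (2 - p) * (2 ^ (p - 1 - 1) * (s ^ (p-1) + (-t) ^ (p-1)))
          = s ^ (p-1) + (-t) ^ (p-1) := by
        rw [← mul_assoc, ← Real.rpow_add two_pos,
          show 2 - p + (p - 1 - 1) = (0:ℝ) by ring, Real.rpow_zero, one_mul]
      rw [hEq] at hmul
      linarith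

/-- Lemma B : a consequence of Jensen's inequality. -/
lemma lemB {p β v u : ℝ} (hp : 2 ≤ p) (hβ : 1 ≤ β) (hv : 0 < v) (hvu : v < u) :
    β * (u ^ ((β + p - 1)/p) - v ^ ((β + p - 1)/p)) ^ p
      ≤ ((β + p - 1)/p) ^ p * ((u - v) ^ (p - 1) * (u ^ β - v ^ β)) := by
  have hppos : (0:ℝ) < p := by linarith
  have hβpos : (0:ℝ) < β := by linarith
  have hD : (0:ℝ) < u - v := by linarith
  set r : ℝ := (β - 1) / p with hr
  have hrnn : 0 ≤ r := div_nonneg (by linarith) hppos.le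
  have hr1 : r + 1 = (β + p - 1)/p := by rw [hr]; field_simp; ring
  have hrp : r * p + 1 = β := by rw [hr]; field_simp; ring
  set μ : Measure ℝ := volume.restrict (Ioc v u) with hμ
  have hμuniv : μ univ = ENNReal.ofReal (u - v) := by
    rw [hμ, Measure.restrict_apply_univ, Real.volume_Ioc]
  haveI : IsFiniteMeasure μ := ⟨by rw [hμuniv]; exact ENNReal.ofReal_lt_top⟩
  haveI : NeZero μ := by
    refine ⟨fun h => ?_⟩
    rw [h] at hμuniv
    simp only [Measure.coe_zero, Pi.zero_apply] at hμuniv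
    rw [eq_comm, ENNReal.ofReal_eq_zero] at hμuniv
    linarith
  have hcont : ∀ q : ℝ, IntegrableOn (fun x : ℝ => x ^ q) (Ioc v u) := by
    intro q
    refine ((ContinuousOn.rpow_const continuousOn_id ?_).integrableOn_Icc).mono_set
      Ioc_subset_Icc_self
    intro x hx
    exact Or.inl (ne_of_gt (lt_of_lt_of_le hv hx.1))
  have hfi : Integrable (fun x : ℝ => x ^ r) μ := hcont r
  have hgi : Integrable (fun x : ℝ => (x ^ r) ^ p) μ := by
    refine (hcont (r * p)).congr_fun (fun x hx => ?_) measurableSet_Ioc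
    rw [← Real.rpow_mul (le_of_lt (lt_trans hv hx.1))]
  have hfs : ∀ᵐ x ∂μ, (fun x : ℝ => x ^ r) x ∈ Ici (0:ℝ) := by
    filter_upwards [ae_restrict_mem measurableSet_Ioc] with x hx
    exact Real.rpow_nonneg (le_of_lt (lt_trans hv hx.1)) r
  have hgc : ContinuousOn (fun x : ℝ => x ^ p) (Ici (0:ℝ)) :=
    ContinuousOn.rpow_const continuousOn_id (fun x _ => Or.inr hppos.le)
  have hjensen := (convexOn_rpow (by linarith : (1:ℝ) ≤ p)).map_average_le
    hgc isClosed_Ici hfs hfi hgi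
  -- evaluate the two integrals
  have int_eval : ∀ q : ℝ, 0 ≤ q →
      ∫ x in Ioc v u, x ^ q = (u ^ (q+1) - v ^ (q+1)) / (q+1) := by
    intro q hqn
    rw [← intervalIntegral.integral_of_le hvu.le]
    exact integral_rpow (Or.inl (by linarith))
  have avg1 : ⨍ x, x ^ r ∂μ = (u - v)⁻¹ * ((u ^ (r+1) - v ^ (r+1))/(r+1)) := by
    rw [average_eq, measureReal_def, hμuniv, ENNReal.toReal_ofReal hD.le, smul_eq_mul]
    congr 1
    exact int_eval r hrnn
  have avg2 : ⨍ x, (x ^ r) ^ p ∂μ = (u - v)⁻¹ * ((u ^ (r*p+1) - v ^ (r*p+1))/(r*p+1)) := by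
    rw [average_eq, measureReal_def, hμuniv, ENNReal.toReal_ofReal hD.le, smul_eq_mul]
    congr 1
    rw [setIntegral_congr_fun measurableSet_Ioc
      (fun x hx => by rw [← Real.rpow_mul (le_of_lt (lt_trans hv hx.1))])]
    exact int_eval (r*p) (mul_nonneg hrnn hppos.le)
  simp only [avg1, avg2, hr1, hrp] at hjensen
  -- now pure algebra
  set γ : ℝ := (β + p - 1)/p with hγ
  have hγpos : (0:ℝ) < γ := div_pos (by linarith) hppos
  set A : ℝ := u ^ γ - v ^ γ with hA
  set B : ℝ := u ^ β - v ^ β with hB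
  have hAnn : 0 ≤ A := sub_nonneg.2 (Real.rpow_le_rpow hv.le hvu.le hγpos.le)
  have hlhs : ((u - v)⁻¹ * (A/γ)) ^ p = A ^ p / ((u-v)^p * γ^p) := by
    rw [show (u - v)⁻¹ * (A/γ) = A / ((u-v)*γ) by field_simp,
      Real.div_rpow hAnn (by positivity), Real.mul_rpow hD.le hγpos.le]
  rw [hlhs] at hjensen
  rw [div_le_iff₀ (by positivity)] at hjensen
  have hsplit : (u-v)^(p-1) * (u-v) = (u-v)^p := by
    rw [Real.rpow_sub_one (ne_of_gt hD)]
    field_simp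
  have e : β * ((u-v)⁻¹ * (B/β) * ((u-v)^p * γ^p)) = γ^p * ((u-v)^(p-1) * B) := by
    rw [← hsplit]
    field_simp
  calc β * A ^ p ≤ β * ((u-v)⁻¹ * (B/β) * ((u-v)^p * γ^p)) :=
        mul_le_mul_of_nonneg_left hjensen hβpos.le
    _ = γ^p * ((u-v)^(p-1) * B) := e

lemma truncPlus_nonneg {M x : ℝ} (hM : 0 ≤ M) : 0 ≤ truncPlus M x :=
  le_min (le_max_right _ _) hM

lemma truncPlus_mono {M x y : ℝ} (h : x ≤ y) : truncPlus M x ≤ truncPlus M y :=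
  min_le_min (max_le_max h le_rfl) le_rfl

lemma truncPlus_lip {M x y : ℝ} (h : y ≤ x) : truncPlus M x - truncPlus M y ≤ x - y := by
  unfold truncPlus
  simp only [min_def, max_def]
  split_ifs <;> linarith

lemma main_case (p β δ M : ℝ) (hp : 2 ≤ p) (hβ : 1 ≤ β)
    (hδ : 0 < δ) (hM : 0 < M) (a b c d : ℝ)
    (h : truncPlus M (b - d) ≤ truncPlus M (a - c)) :
    (1 / (3 * (2 : ℝ) ^ (p - 1))) * (β * p ^ p / (β + p - 1) ^ p) *
        |(truncPlus M (a - c) + δ) ^ ((β + p - 1) / p)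
          - (truncPlus M (b - d) + δ) ^ ((β + p - 1) / p)| ^ p
      ≤ (Jp p (a - b) - Jp p (c - d)) *
        ((truncPlus M (a - c) + δ) ^ β - (truncPlus M (b - d) + δ) ^ β) := by
  have hppos : (0:ℝ) < p := by linarith
  set γ : ℝ := (β + p - 1)/p with hγ
  set u : ℝ := truncPlus M (a - c) + δ with hu
  set v : ℝ := truncPlus M (b - d) + δ with hv'
  rcases eq_or_lt_of_le h with heq | hlt
  · have huv : v = u := by rw [hu, hv', heq]
    rw [huv, sub_self, sub_self, abs_zero, Real.zero_rpow (ne_of_gt hppos), mul_zero, mul_zero]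
  · -- strict case
    have hv : 0 < v := by
      rw [hv']; have := truncPlus_nonneg (x := b - d) hM.le; linarith
    have hvu : v < u := by rw [hu, hv']; linarith
    have hcd : b - d < a - c := by
      by_contra hcon
      push_neg at hcon
      exact absurd (truncPlus_mono hcon) (not_le.2 hlt)
    have hts : c - d ≤ a - b := by linarith
    have hlip : u - v ≤ (a - b) - (c - d) := by
      have := truncPlus_lip (M := M) hcd.le
      rw [hu, hv']; linarith
    have hγpos : (0:ℝ) < γ := div_pos (by linarith) hppos
    have hKpos : (0:ℝ) < 2 ^ (2 - p) := Real.rpow_pos_of_pos two_pos _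
    have hA := JpA hp hts
    have hmon : (u - v) ^ (p-1) ≤ ((a-b) - (c-d)) ^ (p-1) :=
      Real.rpow_le_rpow (by linarith) hlip (by linarith)
    have hB : (0:ℝ) ≤ u ^ β - v ^ β :=
      sub_nonneg.2 (Real.rpow_le_rpow hv.le hvu.le (by linarith))
    have habs : |u ^ γ - v ^ γ| = u ^ γ - v ^ γ :=
      abs_of_nonneg (sub_nonneg.2 (Real.rpow_le_rpow hv.le hvu.le hγpos.le))
    have hlemB := lemB hp hβ hv hvu
    rw [← hγ] at hlemB
    set W : ℝ := (u - v) ^ (p-1) * (u ^ β - v ^ β) with hW'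
    have hW : (0:ℝ) ≤ W := mul_nonneg (Real.rpow_nonneg (by linarith) _) hB
    have hγp : γ ^ p = (β + p - 1) ^ p / p ^ p := by
      rw [hγ]; exact Real.div_rpow (by linarith) hppos.le p
    have hbp : (0:ℝ) < (β + p - 1) ^ p := Real.rpow_pos_of_pos (by linarith) _
    have hpp : (0:ℝ) < p ^ p := Real.rpow_pos_of_pos hppos _
    have h2p1 : (0:ℝ) < (2:ℝ) ^ (p-1) := Real.rpow_pos_of_pos two_pos _
    have hcoef : p ^ p / (β + p - 1) ^ p * γ ^ p = 1 := by
      rw [hγp]; field_simp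
    have h2eq : (2:ℝ) ^ (2-p) * 2 ^ (p-1) = 2 := by
      rw [← Real.rpow_add two_pos, show (2:ℝ) - p + (p-1) = 1 by ring, Real.rpow_one]
    have hconst : 1 / (3 * (2:ℝ) ^ (p-1)) ≤ 2 ^ (2-p) := by
      rw [div_le_iff₀ (by positivity)]
      nlinarith
    calc (1 / (3 * (2:ℝ) ^ (p-1))) * (β * p ^ p / (β + p - 1) ^ p) * |u ^ γ - v ^ γ| ^ p
        = (1 / (3 * (2:ℝ) ^ (p-1))) * (p ^ p / (β + p - 1) ^ p) * (β * (u ^ γ - v ^ γ) ^ p) := by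
          rw [habs]; ring
      _ ≤ (1 / (3 * (2:ℝ) ^ (p-1))) * (p ^ p / (β + p - 1) ^ p) * (γ ^ p * W) := by
          apply mul_le_mul_of_nonneg_left hlemB (by positivity)
      _ = (p ^ p / (β + p - 1) ^ p * γ ^ p) * ((1 / (3 * (2:ℝ) ^ (p-1))) * W) := by ring
      _ = (1 / (3 * (2:ℝ) ^ (p-1))) * W := by rw [hcoef, one_mul]
      _ ≤ 2 ^ (2-p) * W := mul_le_mul_of_nonneg_right hconst hW
      _ ≤ 2 ^ (2-p) * (((a-b) - (c-d)) ^ (p-1) * (u ^ β - v ^ β)) := by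
          apply mul_le_mul_of_nonneg_left _ hKpos.le
          rw [hW']
          exact mul_le_mul_of_nonneg_right hmon hB
      _ = (2 ^ (2-p) * ((a-b) - (c-d)) ^ (p-1)) * (u ^ β - v ^ β) := by ring
      _ ≤ (Jp p (a - b) - Jp p (c - d)) * (u ^ β - v ^ β) :=
          mul_le_mul_of_nonneg_right hA hB

theorem pointwise_ineq_trunc (p β δ M : ℝ) (hp : 2 ≤ p) (hβ : 1 ≤ β)
    (hδ : 0 < δ) (hM : 0 < M) (a b c d : ℝ) :
    (1 / (3 * (2 : ℝ) ^ (p - 1))) * (β * p ^ p / (β + p - 1) ^ p) *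
        |(truncPlus M (a - c) + δ) ^ ((β + p - 1) / p)
          - (truncPlus M (b - d) + δ) ^ ((β + p - 1) / p)| ^ p
      ≤ (Jp p (a - b) - Jp p (c - d)) *
        ((truncPlus M (a - c) + δ) ^ β - (truncPlus M (b - d) + δ) ^ β) := by
  rcases le_total (truncPlus M (b - d)) (truncPlus M (a - c)) with h | h
  · exact main_case p β δ M hp hβ hδ hM a b c d h
  · have H := main_case p β δ M hp hβ hδ hM b a d c h
    have e1 : |(truncPlus M (b - d) + δ) ^ ((β + p - 1) / p)
        - (truncPlus M (a - c) + δ) ^ ((β + p - 1) / p)|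
        = |(truncPlus M (a - c) + δ) ^ ((β + p - 1) / p)
        - (truncPlus M (b - d) + δ) ^ ((β + p - 1) / p)| := abs_sub_comm _ _
    have e2 : (Jp p (b - a) - Jp p (d - c)) *
        ((truncPlus M (b - d) + δ) ^ β - (truncPlus M (a - c) + δ) ^ β)
        = (Jp p (a - b) - Jp p (c - d)) *
        ((truncPlus M (a - c) + δ) ^ β - (truncPlus M (b - d) + δ) ^ β) := by
      rw [show b - a = -(a - b) by ring, show d - c = -(c - d) by ring, Jp_neg, Jp_neg]
      ring
    rw [e1, e2] at H
    exact H
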